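/- Let V be an n×m integer matrix of rank n with n < m, all of whose columns are nonzero. Then the convex cone generated by the columns of V equals ℝ^n if and only if for every index i ∈ {1,…,m} there exists a vector u ∈ ℕ^m with V u = 0 and u_i > 0 (equivalently, the toric ideal I_V contains a binomial x^u − 1 with i in the support of u). -/

import Mathlib

open Matrix

-- bridge mulVec and sum of columns
private lemma mulVec_cols {F : Type*} [CommRing F] {p k : ℕ}
    (f : Fin k → (Fin p → F)) (g : Fin k → F) :
    (Matrix.of fun i l => f l i) *ᵥ g = ∑ l, g l • f l := by
  funext i
  simp [Matrix.mulVec, dotProduct, Finset.sum_apply, mul_comm]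

private lemma cast_mulVec_int_real {n m : ℕ} (V : Matrix (Fin n) (Fin m) ℤ) (u : Fin m → ℤ) :
    (V.map (Int.cast : ℤ → ℝ)) *ᵥ (fun j => (u j : ℝ)) = fun i => ((V *ᵥ u) i : ℝ) := by
  funext i
  exact (RingHom.map_mulVec (Int.castRingHom ℝ) V u i).symm

private lemma cast_mulVec_rat_real {n m : ℕ} (A : Matrix (Fin n) (Fin m) ℚ) (u : Fin m → ℚ) :
    (A.map (Rat.cast : ℚ → ℝ)) *ᵥ (fun j => (u j : ℝ)) = fun i => ((A *ᵥ u) i : ℝ) := by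
  funext i
  exact (RingHom.map_mulVec ((Rat.castHom ℝ)) A u i).symm

private lemma cast_mulVec_int_rat {n m : ℕ} (V : Matrix (Fin n) (Fin m) ℤ) (u : Fin m → ℤ) :
    (V.map (Int.cast : ℤ → ℚ)) *ᵥ (fun j => (u j : ℚ)) = fun i => ((V *ᵥ u) i : ℚ) := by
  funext i
  exact (RingHom.map_mulVec (Int.castRingHom ℚ) V u i).symm


private lemma ker_triv_cast {a k : ℕ} (B : Matrix (Fin a) (Fin k) ℚ)
    (hB : ∀ g : Fin k → ℚ, B *ᵥ g = 0 → g = 0) :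
    ∀ g : Fin k → ℝ, (B.map (Rat.cast : ℚ → ℝ)) *ᵥ g = 0 → g = 0 := by
  intro g hg
  by_contra hne
  have hGdet : (Bᵀ * B).det ≠ 0 := by
    intro h
    obtain ⟨v, hv, hv0⟩ := Matrix.exists_mulVec_eq_zero_iff.mpr h
    apply hv
    apply hB
    have hvker : v ∈ LinearMap.ker (Bᵀ * B).mulVecLin := by
      rw [LinearMap.mem_ker, Matrix.mulVecLin_apply]; exact hv0
    rw [Matrix.ker_mulVecLin_transpose_mul_self B] at hvker
    rw [LinearMap.mem_ker, Matrix.mulVecLin_apply] at hvker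
    exact hvker
  have hcoe : (Bᵀ * B).map (Rat.cast : ℚ → ℝ) = (Rat.castHom ℝ).mapMatrix (Bᵀ * B) := rfl
  have hmap : (Bᵀ * B).map (Rat.cast : ℚ → ℝ)
      = (B.map (Rat.cast : ℚ → ℝ))ᵀ * (B.map (Rat.cast : ℚ → ℝ)) := by
    rw [show (Rat.cast : ℚ → ℝ) = ⇑(Rat.castHom ℝ) from rfl, Matrix.map_mul,
      Matrix.transpose_map]
  have hGR : ((Bᵀ * B).map (Rat.cast : ℚ → ℝ)).det ≠ 0 := by
    rw [hcoe, ← RingHom.map_det (Rat.castHom ℝ)]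
    simpa using hGdet
  apply hGR
  rw [← Matrix.exists_mulVec_eq_zero_iff]
  refine ⟨g, hne, ?_⟩
  rw [hmap, ← Matrix.mulVec_mulVec, hg, Matrix.mulVec_zero]



private lemma surj_of_rank {n m : ℕ} (V : Matrix (Fin n) (Fin m) ℤ) (hrank : V.rank = n) :
    ∀ b : Fin n → ℝ, ∃ w : Fin m → ℝ, (V.map (Int.cast : ℤ → ℝ)) *ᵥ w = b := by
  classical
  set P := LinearMap.range V.mulVecLin with hP
  haveI : Module.Finite ℤ P := inferInstance
  haveI : Module.Free ℤ P := inferInstance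
  have hfr : Module.finrank ℤ P = n := hrank
  let bP : Module.Basis (Fin n) ℤ P := Module.finBasisOfFinrankEq ℤ P hfr
  set B : Matrix (Fin n) (Fin n) ℤ := Matrix.of (fun i k => (bP k : Fin n → ℤ) i) with hBdef
  have hBker : ∀ g : Fin n → ℤ, B *ᵥ g = 0 → g = 0 := by
    intro g hg
    have hli : LinearIndependent ℤ (fun k => (bP k : Fin n → ℤ)) :=
      bP.linearIndependent.map' P.subtype (LinearMap.ker_eq_bot.mpr Subtype.val_injective)
    have := Fintype.linearIndependent_iff.mp hli g (by rw [← mulVec_cols]; exact hg)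
    funext kk; exact this kk
  have hBdet : B.det ≠ 0 := by
    intro h
    obtain ⟨v, hv, hv0⟩ := Matrix.exists_mulVec_eq_zero_iff.mpr h
    exact hv (hBker v hv0)
  set BR : Matrix (Fin n) (Fin n) ℝ := B.map (Int.cast : ℤ → ℝ) with hBR
  have hBRdet : BR.det ≠ 0 := by
    rw [hBR, show ((Int.cast : ℤ → ℝ)) = ⇑(Int.castRingHom ℝ) from rfl,
      show B.map ⇑(Int.castRingHom ℝ) = (Int.castRingHom ℝ).mapMatrix B from rfl,
      ← RingHom.map_det]
    simpa using hBdet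
  intro x
  have hu : ∀ k, ∃ u : Fin m → ℤ, V *ᵥ u = (bP k : Fin n → ℤ) := fun k => (bP k).2
  choose u hu using hu
  set g : Fin n → ℝ := BR⁻¹ *ᵥ x with hg
  refine ⟨fun j => ∑ k, g k * (u k j : ℝ), ?_⟩
  funext i
  have hRow : ∀ k, ∑ j, (V i j : ℝ) * (u k j : ℝ) = (bP k : Fin n → ℤ) i := by
    intro k
    have := congrFun (hu k) i
    calc ∑ j, (V i j : ℝ) * (u k j : ℝ) = ((V *ᵥ u k) i : ℝ) := by
          rw [Matrix.mulVec, dotProduct]; push_cast; rfl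
      _ = ((bP k : Fin n → ℤ) i : ℝ) := by rw [this]
  calc (V.map (Int.cast : ℤ → ℝ) *ᵥ fun j => ∑ k, g k * (u k j : ℝ)) i
      = ∑ j, (V i j : ℝ) * ∑ k, g k * (u k j : ℝ) := by
        rw [Matrix.mulVec, dotProduct]; rfl
    _ = ∑ k, g k * ∑ j, (V i j : ℝ) * (u k j : ℝ) := by
        simp_rw [Finset.mul_sum]
        rw [Finset.sum_comm]
        congr 1; funext k
        congr 1; funext j; ring
    _ = ∑ k, BR i k * g k := by
        congr 1; funext k; rw [hRow k]
        rw [hBR]; simp [Matrix.map_apply, hBdef, mul_comm]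
    _ = (BR *ᵥ g) i := by rw [Matrix.mulVec, dotProduct]
    _ = x i := by
        rw [hg, Matrix.mulVec_mulVec, Matrix.mul_nonsing_inv _ (isUnit_iff_ne_zero.mpr hBRdet),
          Matrix.one_mulVec]







-- every real kernel vector with all coords ≥ 1 yields a positive rational kernel vector
private lemma exists_pos_rat_kernel {n m : ℕ} (V : Matrix (Fin n) (Fin m) ℤ)
    (hsurj : ∀ b : Fin n → ℝ, ∃ w : Fin m → ℝ, (V.map (Int.cast : ℤ → ℝ)) *ᵥ w = b)
    (v : Fin m → ℝ) (hv0 : (V.map (Int.cast : ℤ → ℝ)) *ᵥ v = 0) (hv1 : ∀ j, (1:ℝ) ≤ v j) :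
    ∃ w : Fin m → ℚ, (V.map (Int.cast : ℤ → ℚ)) *ᵥ w = 0 ∧ ∀ j, 0 < w j := by
  classical
  set A : Matrix (Fin n) (Fin m) ℚ := V.map (Int.cast : ℤ → ℚ) with hA
  set AR : Matrix (Fin n) (Fin m) ℝ := V.map (Int.cast : ℤ → ℝ) with hAR
  have hARA : AR = A.map (Rat.cast : ℚ → ℝ) := by
    rw [hAR, hA, Matrix.map_map]
    congr 1
  -- rank facts
  have hsurjLin : Function.Surjective AR.mulVecLin := by
    intro b; obtain ⟨w, hw⟩ := hsurj b; exact ⟨w, hw⟩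
  have hrangeR : LinearMap.range AR.mulVecLin = ⊤ := LinearMap.range_eq_top.mpr hsurjLin
  have hkerR : Module.finrank ℝ (LinearMap.ker AR.mulVecLin) + n = m := by
    have h1 := LinearMap.finrank_range_add_finrank_ker AR.mulVecLin
    rw [hrangeR] at h1
    rw [finrank_top] at h1
    rw [Module.finrank_pi, Module.finrank_pi] at h1
    simpa [Fintype.card_fin, add_comm] using h1
  set K := LinearMap.ker A.mulVecLin with hK
  have hKrank : Module.finrank ℚ K + A.rank = m := by
    have h1 := LinearMap.finrank_range_add_finrank_ker A.mulVecLin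
    rw [Module.finrank_pi] at h1
    simpa [Matrix.rank, Fintype.card_fin, add_comm] using h1
  have hAle : A.rank ≤ n := A.rank_le_card_height.trans (by simp)
  set k := Module.finrank ℚ K with hk
  let bK : Module.Basis (Fin k) ℚ K := Module.finBasis ℚ K
  -- the cast family
  set cb : Fin k → (Fin m → ℝ) := fun l j => ((bK l : Fin m → ℚ) j : ℝ) with hcb
  have hcbker : ∀ l, AR *ᵥ cb l = 0 := by
    intro l
    have h1 : A *ᵥ (bK l : Fin m → ℚ) = 0 := (bK l).2
    rw [hARA]
    have := cast_mulVec_rat_real A (bK l : Fin m → ℚ)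
    rw [hcb]
    rw [this, h1]
    funext i; simp
  have hli : LinearIndependent ℝ cb := by
    rw [Fintype.linearIndependent_iff]
    intro g hg
    have hBq : ∀ gq : Fin k → ℚ, (Matrix.of fun j l => (bK l : Fin m → ℚ) j) *ᵥ gq = 0 → gq = 0 := by
      intro gq hgq
      rw [mulVec_cols] at hgq
      have hliq : LinearIndependent ℚ (fun l => (bK l : Fin m → ℚ)) :=
        bK.linearIndependent.map' K.subtype (LinearMap.ker_eq_bot.mpr Subtype.val_injective)
      have := Fintype.linearIndependent_iff.mp hliq gq hgq
      funext l; exact this l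
    have hmapeq : (Matrix.of fun j l => (bK l : Fin m → ℚ) j).map (Rat.cast : ℚ → ℝ)
        = Matrix.of fun j l => cb l j := by
      funext j l; rfl
    have h0 : (Matrix.of (fun j l => cb l j)) *ᵥ g = 0 := by
      rw [mulVec_cols]; exact hg
    have := ker_triv_cast _ hBq g (by rw [hmapeq]; exact h0)
    intro l; exact congrFun this l
  -- span of cb equals the real kernel
  set S := Submodule.span ℝ (Set.range cb) with hS
  have hSle : S ≤ LinearMap.ker AR.mulVecLin := by
    rw [hS, Submodule.span_le]
    rintro _ ⟨l, rfl⟩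
    rw [SetLike.mem_coe, LinearMap.mem_ker, Matrix.mulVecLin_apply]
    exact hcbker l
  have hSfr : Module.finrank ℝ S = k := by
    rw [hS, finrank_span_eq_card hli, Fintype.card_fin]
  have hSeq : S = LinearMap.ker AR.mulVecLin := by
    apply Submodule.eq_of_le_of_finrank_le hSle
    rw [hSfr]
    omega
  have hvS : v ∈ S := by
    rw [hSeq, LinearMap.mem_ker, Matrix.mulVecLin_apply]
    exact hv0
  obtain ⟨r, hr⟩ := (Submodule.mem_span_range_iff_exists_fun ℝ).mp hvS
  -- approximate the real coefficients by rationals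
  set φ : (Fin k → ℝ) → (Fin m → ℝ) := fun c j => ∑ l, c l * ((bK l : Fin m → ℚ) j : ℝ) with hφ
  have hφr : ∀ j, φ r j = v j := by
    intro j
    have := congrFun hr j
    rw [hφ]
    simp only [Finset.sum_apply, Pi.smul_apply, smul_eq_mul, hcb] at this ⊢
    exact this
  set U : Set (Fin k → ℝ) := ⋂ j, {c | 0 < φ c j} with hU
  have hUopen : IsOpen U := by
    apply isOpen_iInter_of_finite
    intro j
    have hcont : Continuous (fun c : Fin k → ℝ => φ c j) := by
      apply continuous_finset_sum
      intro l _
      exact (continuous_apply l).mul continuous_const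
    exact isOpen_lt continuous_const hcont
  have hrU : r ∈ U := Set.mem_iInter.mpr fun j => by
    simp only [Set.mem_setOf_eq, hφr j]
    exact lt_of_lt_of_le one_pos (hv1 j)
  have hdense : Dense (Set.univ.pi fun _ : Fin k => Set.range (Rat.cast : ℚ → ℝ)) :=
    dense_pi Set.univ (fun i _ => Rat.denseRange_cast)
  obtain ⟨c, hcU, hcD⟩ := hdense.inter_open_nonempty U hUopen ⟨r, hrU⟩
  have hqex : ∀ l, ∃ qq : ℚ, (qq : ℝ) = c l := fun l => hcD l (Set.mem_univ l)
  choose q hq using hqex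
  refine ⟨fun j => ∑ l, q l * (bK l : Fin m → ℚ) j, ?_, ?_⟩
  · have hyv : ((∑ l, q l • bK l : K) : Fin m → ℚ)
        = fun j => ∑ l, q l * (bK l : Fin m → ℚ) j := by
      funext j
      simp [Finset.sum_apply]
    have hmem2 : A *ᵥ ((∑ l, q l • bK l : K) : Fin m → ℚ) = 0 := (∑ l, q l • bK l : K).2
    rw [hyv] at hmem2
    exact hmem2
  · intro j
    have hpos : (0:ℝ) < φ c j := Set.mem_iInter.mp hcU j
    have hcast : ((∑ l, q l * (bK l : Fin m → ℚ) j : ℚ) : ℝ) = φ c j := by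
      rw [hφ]
      push_cast
      exact Finset.sum_congr rfl fun l _ => by rw [hq l]
    have : (0:ℝ) < ((∑ l, q l * (bK l : Fin m → ℚ) j : ℚ) : ℝ) := by rw [hcast]; exact hpos
    exact_mod_cast this



private lemma nat_of_pos_rat_kernel {n m : ℕ} (V : Matrix (Fin n) (Fin m) ℤ)
    (w : Fin m → ℚ) (hker : (V.map (Int.cast : ℤ → ℚ)) *ᵥ w = 0) (hpos : ∀ j, 0 < w j) :
    ∃ u : Fin m → ℕ, V *ᵥ (fun j => (u j : ℤ)) = 0 ∧ ∀ i, 0 < u i := by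
  classical
  set N : ℕ := ∏ j, (w j).den with hN
  have hdvd : ∀ j, (w j).den ∣ N := fun j => Finset.dvd_prod_of_mem _ (Finset.mem_univ j)
  have hNpos : 0 < N := Finset.prod_pos fun j _ => (w j).pos
  set cz : Fin m → ℤ := fun j => (w j).num * ((N / (w j).den : ℕ) : ℤ) with hcz
  have hczq : ∀ j, ((cz j : ℚ)) = (N : ℚ) * w j := by
    intro j
    have hden : ((w j).den : ℚ) ≠ 0 := by
      exact_mod_cast (w j).pos.ne'
    have h1 : ((w j).den : ℚ) * w j = ((w j).num : ℚ) := by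
      have hnd := Rat.num_div_den (w j)
      rw [div_eq_iff hden] at hnd
      rw [mul_comm]
      exact hnd.symm
    have h2 : (N:ℚ) = ((w j).den : ℚ) * ((N / (w j).den : ℕ) : ℚ) := by
      rw [← Nat.cast_mul, Nat.mul_div_cancel' (hdvd j)]
    calc ((cz j : ℚ)) = ((w j).num : ℚ) * ((N / (w j).den : ℕ) : ℚ) := by
          rw [hcz]
          simp only [Int.cast_mul, Int.cast_natCast]
      _ = ((N / (w j).den : ℕ) : ℚ) * (((w j).den : ℚ) * w j) := by rw [h1]; ring
      _ = (N : ℚ) * w j := by rw [h2]; ring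
  have hczpos : ∀ j, 0 < cz j := by
    intro j
    have : (0:ℚ) < (cz j : ℚ) := by
      rw [hczq j]
      exact mul_pos (by exact_mod_cast hNpos) (hpos j)
    exact_mod_cast this
  have hkerz : V *ᵥ cz = 0 := by
    have hcast := cast_mulVec_int_rat V cz
    have hl : (fun j => (cz j : ℚ)) = fun j => (N : ℚ) * w j := funext fun j => hczq j
    have hr : (V.map (Int.cast : ℤ → ℚ)) *ᵥ (fun j => (N : ℚ) * w j) = 0 := by
      have : (fun j => (N : ℚ) * w j) = (N : ℚ) • w := by funext j; simp
      rw [this, Matrix.mulVec_smul, hker, smul_zero]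
    funext i
    have : ((V *ᵥ cz) i : ℚ) = 0 := by
      rw [← congrFun hcast i, hl, hr]; rfl
    exact_mod_cast this
  refine ⟨fun j => (cz j).toNat, ?_, fun i => by
    show 0 < (cz i).toNat
    have h := hczpos i
    omega⟩
  have : (fun j => (((cz j).toNat : ℤ))) = cz := by
    funext j
    exact Int.toNat_of_nonneg (hczpos j).le
  rw [this, hkerz]


/-- For an `n × m` integer matrix `V` of rank `n`, `n < m`, with all
columns nonzero, the convex cone generated by the columns of `V` equals `ℝⁿ` if and
only if for every index `i` there is `u ∈ ℕᵐ` with `V u = 0` and `uᵢ > 0`. -/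
theorem complete_iff_forall_exists_nonneg_kernel_vector
    (n m : ℕ) (hnm : n < m) (V : Matrix (Fin n) (Fin m) ℤ)
    (hrank : V.rank = n)
    (hcols : ∀ j : Fin m, ∃ i, V i j ≠ 0) :
    (∀ b : Fin n → ℝ, ∃ u : Fin m → ℝ,
        (∀ i, 0 ≤ u i) ∧ (V.map (Int.cast : ℤ → ℝ)) *ᵥ u = b)
      ↔ (∀ i : Fin m, ∃ u : Fin m → ℕ,
        V *ᵥ (fun j => (u j : ℤ)) = 0 ∧ 0 < u i) := by
  constructor
  · -- forward direction
    intro hl i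
    have hsurj : ∀ b : Fin n → ℝ, ∃ w : Fin m → ℝ,
        (V.map (Int.cast : ℤ → ℝ)) *ᵥ w = b := by
      intro b; obtain ⟨u, _, hu⟩ := hl b; exact ⟨u, hu⟩
    obtain ⟨u0, hu0nn, hu0⟩ := hl (-((V.map (Int.cast : ℤ → ℝ)) *ᵥ (fun _ => 1)))
    set v : Fin m → ℝ := fun j => u0 j + 1 with hv
    have hv0 : (V.map (Int.cast : ℤ → ℝ)) *ᵥ v = 0 := by
      have : v = u0 + (fun _ => 1) := by funext j; simp [hv]
      rw [this, Matrix.mulVec_add, hu0]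
      simp
    have hv1 : ∀ j, (1:ℝ) ≤ v j := fun j => by
      simp only [hv]; linarith [hu0nn j]
    obtain ⟨w, hwker, hwpos⟩ := exists_pos_rat_kernel V hsurj v hv0 hv1
    obtain ⟨u, huker, hupos⟩ := nat_of_pos_rat_kernel V w hwker hwpos
    exact ⟨u, huker, hupos i⟩
  · -- backward direction
    intro h b
    choose uu huu hupos using h
    set U : Fin m → ℤ := fun j => ∑ i, (uu i j : ℤ) with hU
    have hU1 : ∀ j, (1:ℤ) ≤ U j := by
      intro j
      rw [hU]
      calc (1:ℤ) ≤ (uu j j : ℤ) := by exact_mod_cast hupos j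
        _ ≤ ∑ i, (uu i j : ℤ) :=
          Finset.single_le_sum (f := fun i => (uu i j : ℤ))
            (fun i _ => by positivity) (Finset.mem_univ j)
    have hUker : V *ᵥ U = 0 := by
      have : U = ∑ i, (fun j => (uu i j : ℤ)) := by
        funext j; rw [hU]; simp
      have h2 := map_sum V.mulVecLin (fun i => (fun j => (uu i j : ℤ))) Finset.univ
      rw [this, ← Matrix.mulVecLin_apply, h2]
      refine Finset.sum_eq_zero fun i _ => ?_
      rw [Matrix.mulVecLin_apply]
      exact huu i
    obtain ⟨w, hw⟩ := surj_of_rank V hrank b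
    set t : ℝ := ∑ j, |w j| with ht
    have ht0 : 0 ≤ t := Finset.sum_nonneg fun j _ => abs_nonneg _
    have htw : ∀ j, |w j| ≤ t :=
      fun j => Finset.single_le_sum (f := fun i => |w i|)
        (fun i _ => abs_nonneg _) (Finset.mem_univ j)
    refine ⟨fun j => w j + t * ((U j : ℤ) : ℝ), fun j => ?_, ?_⟩
    · show (0:ℝ) ≤ w j + t * ((U j : ℤ) : ℝ)
      have h1 : (1:ℝ) ≤ ((U j : ℤ) : ℝ) := by exact_mod_cast hU1 j
      have h2 : t ≤ t * ((U j : ℤ) : ℝ) := le_mul_of_one_le_right ht0 h1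
      have h3 : -w j ≤ |w j| := neg_le_abs _
      linarith [htw j]
    · have hsplit : (fun j => w j + t * ((U j : ℤ) : ℝ))
          = w + t • (fun j => ((U j : ℤ) : ℝ)) := by
        funext j; simp
      rw [hsplit, Matrix.mulVec_add, Matrix.mulVec_smul, hw,
        cast_mulVec_int_real V U, hUker]
      funext i
      simp
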